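/- If α is a complex root of p(z) = z^4 - z^3 - z^2 - z + 1 that is not real, then |α| = 1. -/

import Mathlib

theorem stmt_5 (α : ℂ) (hroot : α ^ 4 - α ^ 3 - α ^ 2 - α + 1 = 0) (him : α.im ≠ 0) :
    ‖α‖ = 1 := by
  set x := α.re with hx
  set y := α.im with hy
  have h1 : x^4 - 6*x^2*y^2 + y^4 - x^3 + 3*x*y^2 - x^2 + y^2 - x + 1 = 0 := by
    have := congrArg Complex.re hroot
    simp [Complex.ext_iff, pow_succ, Complex.mul_re, Complex.mul_im] at this
    linarith [this]
  have h2y : y * (4*x^3 - 4*x*y^2 - 3*x^2 + y^2 - 2*x - 1) = 0 := by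
    have := congrArg Complex.im hroot
    simp [Complex.ext_iff, pow_succ, Complex.mul_re, Complex.mul_im] at this
    ring_nf
    ring_nf at this
    linarith [this]
  have h2 : 4*x^3 - 4*x*y^2 - 3*x^2 + y^2 - 2*x - 1 = 0 :=
    (mul_eq_zero.mp h2y).resolve_left him
  have hQ : (4*x^2 - 2*x - 3) * (16*x^4 - 16*x^3 + 8*x^2 - 2*x + 1) = 0 := by
    linear_combination (-(1-4*x)^2) * h1 +
      ((4*x^3 - 4*x*y^2 - 3*x^2 + y^2 - 2*x - 1) + 2*(1+2*x+3*x^2-4*x^3)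
        + (1-4*x)*(1+3*x-6*x^2)) * h2
  have hQpos : 16*x^4 - 16*x^3 + 8*x^2 - 2*x + 1 > 0 := by nlinarith [sq_nonneg (4*x^2-2*x), sq_nonneg (2*x-1)]
  have h3 : 4*x^2 - 2*x - 3 = 0 := by
    rcases mul_eq_zero.mp hQ with h | h
    · exact h
    · linarith
  have hxne : (1:ℝ) - 4*x ≠ 0 := by
    intro h
    have : x = 1/4 := by linarith
    rw [this] at h3; norm_num at h3
  have h4 : (1 - 4*x) * (x^2 + y^2 - 1) = 0 := by linear_combination h2 + (-2*x)*h3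
  have h5 : x^2 + y^2 = 1 := by
    have := (mul_eq_zero.mp h4).resolve_left hxne
    linarith
  have habs : ‖α‖ ^ 2 = 1 := by
    rw [Complex.sq_norm, Complex.normSq_apply, ← hx, ← hy]
    linarith
  nlinarith [norm_nonneg α, habs]
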